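/- If r ≠ 1, then f has a unique fixed point in [0,∞). Specifically, if r < 1 the unique fixed point is x_l* = 1/(γ̲ + 2·b̄) and it lies in the open interval (0, x_l); if r > 1 the unique fixed point is x_r* = 1/(γ̄ + 2·b̲) and it lies in the open interval (x_u, x_m). -/

import Mathlib

lemma fix_aux (g b : ℝ) (hd : 0 < g + 2 * b) (hb : 0 < b) :
    (1 - g * (1 / (g + 2 * b))) / (2 * b) = 1 / (g + 2 * b) := by
  rw [div_eq_div_iff (by positivity) hd.ne']
  field_simp
  ring

set_option maxHeartbeats 1000000 in
/-- If r ≠ 1, f has a unique fixed point in [0,∞): for r < 1 it is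
x_l* = 1/(γ̲ + 2b̄) ∈ (0, x_l); for r > 1 it is x_r* = 1/(γ̄ + 2b̲) ∈ (x_u, x_m). -/
theorem unique_fixed_point_of_f
    (bU bL gU gL r xl xu xm : ℝ) (f : ℝ → ℝ)
    (h1 : bU ≥ gU) (h2 : gU ≥ bL) (h3 : bL ≥ gL) (h4 : gL ≥ 0)
    (h5 : 0 < bL) (h6 : bL < bU) (h7 : gL < gU)
    (hr : r = (gU - gL) / (bU - bL))
    (hxl : xl = 1 / (gL + 2 * bU * r))
    (hxu : xu = 1 / (gU + 2 * bL * r))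
    (hxm : xm = 1 / gU)
    (hf1 : ∀ x : ℝ, 0 ≤ x → x ≤ xl → f x = (1 - gL * x) / (2 * bU))
    (hf2 : ∀ x : ℝ, xl ≤ x → x ≤ xu → f x = r * x)
    (hf3 : ∀ x : ℝ, xu ≤ x → x ≤ xm → f x = (1 - gU * x) / (2 * bL))
    (hf4 : ∀ x : ℝ, xm ≤ x → f x = 0)
    (hrne : r ≠ 1) :
    (∃! x : ℝ, 0 ≤ x ∧ f x = x) ∧
    (r < 1 →
      (∀ x : ℝ, 0 ≤ x → (f x = x ↔ x = 1 / (gL + 2 * bU))) ∧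
      0 < 1 / (gL + 2 * bU) ∧ 1 / (gL + 2 * bU) < xl) ∧
    (r > 1 →
      (∀ x : ℝ, 0 ≤ x → (f x = x ↔ x = 1 / (gU + 2 * bL))) ∧
      xu < 1 / (gU + 2 * bL) ∧ 1 / (gU + 2 * bL) < xm) := by
  have hb : (0:ℝ) < bU - bL := by linarith
  have hg : (0:ℝ) < gU - gL := by linarith
  have hrpos : 0 < r := by rw [hr]; positivity
  have hgU : 0 < gU := lt_of_lt_of_le h5 h2
  have hbU : 0 < bU := by linarith
  have hdl : 0 < gL + 2 * bU := by linarith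
  have hdu : 0 < gU + 2 * bL := by linarith
  have hdlr : 0 < gL + 2 * bU * r := by nlinarith [mul_pos hbU hrpos]
  have hdur : 0 < gU + 2 * bL * r := by nlinarith [mul_pos h5 hrpos]
  have hxlpos : 0 < xl := by rw [hxl]; positivity
  have hxupos : 0 < xu := by rw [hxu]; positivity
  have hxmpos : 0 < xm := by rw [hxm]; positivity
  -- r < 1 case
  have keyLT : r < 1 →
      (∀ x : ℝ, 0 ≤ x → (f x = x ↔ x = 1 / (gL + 2 * bU))) ∧
      0 < 1 / (gL + 2 * bU) ∧ 1 / (gL + 2 * bU) < xl := by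
    intro hlt
    have hxs_lt_xl : 1 / (gL + 2 * bU) < xl := by
      rw [hxl]; exact one_div_lt_one_div_of_lt hdlr (by nlinarith)
    have hxspos : 0 < 1 / (gL + 2 * bU) := by positivity
    refine ⟨?_, hxspos, hxs_lt_xl⟩
    intro x hx
    constructor
    · intro hfx
      by_cases h1c : x ≤ xl
      · rw [hf1 x hx h1c] at hfx
        have h' : 1 - gL * x = x * (2 * bU) := by
          field_simp at hfx; linarith
        rw [eq_div_iff hdl.ne']
        nlinarith
      · push_neg at h1c
        by_cases h2c : x ≤ xu
        · rw [hf2 x h1c.le h2c] at hfx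
          exfalso
          have hxpos : 0 < x := lt_trans hxlpos h1c
          nlinarith
        · push_neg at h2c
          by_cases h3c : x ≤ xm
          · rw [hf3 x h2c.le h3c] at hfx
            exfalso
            have h' : (gU + 2 * bL) * x = 1 := by
              field_simp at hfx; linarith
            have hxu_gt : 1 / (gU + 2 * bL) < xu := by
              rw [hxu]; exact one_div_lt_one_div_of_lt hdur (by nlinarith)
            have hxeq : x = 1 / (gU + 2 * bL) := by
              rw [eq_div_iff hdu.ne']; linarith
            rw [hxeq] at h2c; linarith
          · push_neg at h3c
            rw [hf4 x h3c.le] at hfx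
            exfalso; linarith
    · intro hx'
      subst hx'
      rw [hf1 _ hxspos.le hxs_lt_xl.le]
      exact fix_aux gL bU hdl hbU
  -- r > 1 case
  have keyGT : r > 1 →
      (∀ x : ℝ, 0 ≤ x → (f x = x ↔ x = 1 / (gU + 2 * bL))) ∧
      xu < 1 / (gU + 2 * bL) ∧ 1 / (gU + 2 * bL) < xm := by
    intro hgt
    have hxu_lt : xu < 1 / (gU + 2 * bL) := by
      rw [hxu]; exact one_div_lt_one_div_of_lt hdu (by nlinarith)
    have hxs_lt_xm : 1 / (gU + 2 * bL) < xm := by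
      rw [hxm]; exact one_div_lt_one_div_of_lt hgU (by nlinarith)
    have hxspos : 0 < 1 / (gU + 2 * bL) := by positivity
    refine ⟨?_, hxu_lt, hxs_lt_xm⟩
    intro x hx
    constructor
    · intro hfx
      by_cases h1c : x ≤ xl
      · rw [hf1 x hx h1c] at hfx
        exfalso
        have h' : (gL + 2 * bU) * x = 1 := by
          field_simp at hfx; linarith
        have hxl_lt : xl < 1 / (gL + 2 * bU) := by
          rw [hxl]; exact one_div_lt_one_div_of_lt hdl (by nlinarith)
        have hxeq : x = 1 / (gL + 2 * bU) := by
          rw [eq_div_iff hdl.ne']; linarith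
        rw [hxeq] at h1c; linarith
      · push_neg at h1c
        by_cases h2c : x ≤ xu
        · rw [hf2 x h1c.le h2c] at hfx
          exfalso
          have hxpos : 0 < x := lt_trans hxlpos h1c
          nlinarith
        · push_neg at h2c
          by_cases h3c : x ≤ xm
          · rw [hf3 x h2c.le h3c] at hfx
            have h' : 1 - gU * x = x * (2 * bL) := by
              field_simp at hfx; linarith
            rw [eq_div_iff hdu.ne']
            nlinarith
          · push_neg at h3c
            rw [hf4 x h3c.le] at hfx
            exfalso; linarith
    · intro hx'
      subst hx'
      rw [hf3 _ hxu_lt.le hxs_lt_xm.le]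
      exact fix_aux gU bL hdu h5
  refine ⟨?_, keyLT, keyGT⟩
  rcases hrne.lt_or_gt with hlt | hgt
  · obtain ⟨hiff, hpos, _⟩ := keyLT hlt
    exact ⟨1 / (gL + 2 * bU), ⟨hpos.le, (hiff _ hpos.le).mpr rfl⟩,
      fun y hy => (hiff y hy.1).mp hy.2⟩
  · obtain ⟨hiff, hlb, hub⟩ := keyGT hgt
    have hpos : 0 < 1 / (gU + 2 * bL) := by positivity
    exact ⟨1 / (gU + 2 * bL), ⟨hpos.le, (hiff _ hpos.le).mpr rfl⟩,
      fun y hy => (hiff y hy.1).mp hy.2⟩
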